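/- Let Ω be a set and C a set of subsets of Ω. Then the following are equivalent: (i) there exists a linear order on Ω under which every member of C is convex; (ii) for every finite subset C' ⊆ C there exists a linear order on Ω under which every member of C' is convex. -/

import Mathlib

/-- A subset `A` is convex with respect to an order relation `le` if whenever
`p ≤ q ≤ r` with `p ∈ A` and `r ∈ A`, also `q ∈ A`. -/
def IsConvex {Ω : Type*} (le : Ω → Ω → Prop) (A : Set Ω) : Prop :=
  ∀ p q r : Ω, le p q → le q r → p ∈ A → r ∈ A → q ∈ A

/-- Two subsets overlap if they have nonempty intersection and neither contains the other. -/
def Overlap {Ω : Type*} (A B : Set Ω) : Prop :=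
  (A ∩ B).Nonempty ∧ ¬ A ⊆ B ∧ ¬ B ⊆ A

/-- A patchwork on `Ω` is a set of subsets of `Ω` containing `∅` and `Ω` and closed under
intersection, union and difference of overlapping pairs. -/
def IsPatchwork {Ω : Type*} (P : Set (Set Ω)) : Prop :=
  ∅ ∈ P ∧ Set.univ ∈ P ∧
    ∀ A ∈ P, ∀ B ∈ P, Overlap A B → A ∩ B ∈ P ∧ A ∪ B ∈ P ∧ A \ B ∈ P

/-- A member of a patchwork is autonomous if it is nonempty and overlaps no member. -/
def Autonomous {Ω : Type*} (P : Set (Set Ω)) (A : Set Ω) : Prop :=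
  A ∈ P ∧ A.Nonempty ∧ ∀ B ∈ P, ¬ Overlap A B

/-- The cohort under `B`: the maximal autonomous proper subsets of `B`. -/
def Cohort {Ω : Type*} (P : Set (Set Ω)) (B : Set Ω) : Set (Set Ω) :=
  {A | Autonomous P A ∧ A ⊂ B ∧ ∀ C, Autonomous P C → C ⊂ B → A ⊆ C → A = C}

/-- Two members of a patchwork are adjacent if they are disjoint and their union is a member. -/
def Adjacent {Ω : Type*} (P : Set (Set Ω)) (A B : Set Ω) : Prop :=
  Disjoint A B ∧ A ∪ B ∈ P

/-- The smallest patchwork on `Ω` containing `C`. -/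
def patchworkClosure {Ω : Type*} (C : Set (Set Ω)) : Set (Set Ω) :=
  ⋂₀ {P | IsPatchwork P ∧ C ⊆ P}

theorem statement0 {Ω : Type*} (C : Set (Set Ω)) :
    (∃ L : LinearOrder Ω, ∀ A ∈ C, IsConvex L.le A) ↔
      ∀ C' ⊆ C, C'.Finite → ∃ L : LinearOrder Ω, ∀ A ∈ C', IsConvex L.le A := by
  constructor
  · rintro ⟨L, hL⟩ C' hC' _
    exact ⟨L, fun A hA => hL A (hC' hA)⟩
  · intro h
    classical
    -- index type: finite subsets of C
    let S := {s : Set (Set Ω) // s ⊆ C ∧ s.Finite}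
    have hS : ∀ s : S, ∃ L : LinearOrder Ω, ∀ A ∈ s.1, IsConvex L.le A :=
      fun s => h s.1 s.2.1 s.2.2
    choose L hL using hS
    haveI : Nonempty S := ⟨⟨∅, by simp, Set.finite_empty⟩⟩
    -- filter of "eventually large" finite subsets
    let f : Filter S := ⨅ s : S, Filter.principal {t : S | s.1 ⊆ t.1}
    have hdir : Directed (· ≥ ·) (fun s : S => Filter.principal {t : S | s.1 ⊆ t.1}) := by
      intro s₁ s₂
      refine ⟨⟨s₁.1 ∪ s₂.1, Set.union_subset s₁.2.1 s₂.2.1, s₁.2.2.union s₂.2.2⟩, ?_, ?_⟩ <;>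
        · simp only [ge_iff_le, Filter.le_principal_iff, Filter.mem_principal]
          intro t ht
          first
            | exact (Set.union_subset_iff.mp ht).1
            | exact (Set.union_subset_iff.mp ht).2
    have hne : f.NeBot := by
      refine Filter.iInf_neBot_of_directed hdir (fun s => ?_)
      exact Filter.principal_neBot_iff.mpr ⟨s, Set.mem_setOf.mpr subset_rfl⟩
    obtain ⟨U, hU⟩ := Ultrafilter.exists_le f
    have hbig : ∀ s : S, {t : S | s.1 ⊆ t.1} ∈ U := by
      intro s
      exact hU (Filter.mem_iInf_of_mem s (Filter.mem_principal_self _))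
    -- define the limit order
    set le : Ω → Ω → Prop := fun a b => {s : S | (L s).le a b} ∈ U with hle
    have le_refl : ∀ a, le a a := fun a => by
      simp only [hle]
      exact Filter.mem_of_superset Filter.univ_mem (fun s _ => (L s).le_refl a)
    have le_trans : ∀ a b c, le a b → le b c → le a c := by
      intro a b c hab hbc
      exact Filter.mem_of_superset (Filter.inter_mem hab hbc)
        (fun s hs => (L s).le_trans _ _ _ hs.1 hs.2)
    have le_antisymm : ∀ a b, le a b → le b a → a = b := by
      intro a b hab hba
      haveI := U.neBot
      obtain ⟨s, h1, h2⟩ := Filter.nonempty_of_mem (Filter.inter_mem hab hba)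
      exact (L s).le_antisymm _ _ h1 h2
    have le_total : ∀ a b, le a b ∨ le b a := by
      intro a b
      by_cases hab : le a b
      · exact Or.inl hab
      · right
        have := (Ultrafilter.compl_mem_iff_notMem (s := {s : S | (L s).le a b})).mpr hab
        refine Filter.mem_of_superset this (fun s hs => ?_)
        exact ((L s).le_total a b).resolve_left hs
    refine ⟨{ le := le
              le_refl := le_refl
              le_trans := le_trans
              le_antisymm := le_antisymm
              le_total := le_total
              toDecidableLE := fun a b => Classical.dec _ }, ?_⟩
    intro A hA p q r hpq hqr hp hr
    haveI := U.neBot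
    have hmemA : {t : S | A ∈ t.1} ∈ U := by
      refine Filter.mem_of_superset (hbig ⟨{A}, by simpa using hA, Set.finite_singleton A⟩) ?_
      intro t ht
      exact ht rfl
    obtain ⟨s, ⟨hs1, hs2⟩, hs3⟩ :=
      Filter.nonempty_of_mem (Filter.inter_mem (Filter.inter_mem hpq hqr) hmemA)
    exact hL s A hs3 p q r hs1 hs2 hp hr
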